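/- The Yang–Baxter relation A_{i+1}(x)·A_i(x⊕y)·A_{i+1}(y) = A_i(y)·A_{i+1}(x⊕y)·A_i(x) holds for all i > 0, where A_i(x) := 1 + x·a_i are the diagonal box-adding operators on strict partitions and x⊕y := x+y+βxy. -/

import Mathlib

noncomputable section
open Finset

/-- A strict partition: a strictly decreasing list of positive integers. -/
def StrictPartition : Type := {l : List ℕ // l.Chain' (· > ·) ∧ ∀ x ∈ l, 0 < x}

/-- The shifted diagram of a list `l = (l₁, l₂, …)`:
`SD = {(i, i+j-1) : 1 ≤ i ≤ length l, 1 ≤ j ≤ lᵢ}` (rows and columns indexed from 1). -/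
def shiftedDiagram (l : List ℕ) : Finset (ℕ × ℕ) :=
  (Finset.Icc 1 l.length ×ˢ Finset.Icc 1 (l.length + l.sum)).filter
    fun p => p.1 ≤ p.2 ∧ p.2 < p.1 + l.getD (p.1 - 1) 0

/-- The shifted diagram of a strict partition. -/
def SD (μ : StrictPartition) : Finset (ℕ × ℕ) := shiftedDiagram μ.1

/-- `c` is a removable box of the strict partition `μ`: `c ∈ SD μ` and deleting `c`
yields the shifted diagram of a strict partition. -/
def IsRemovable (μ : StrictPartition) (c : ℕ × ℕ) : Prop :=
  c ∈ SD μ ∧ ∃ ν : StrictPartition, SD ν = (SD μ).erase c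

/-- `c` is an addable box of the strict partition `μ`: `c ∉ SD μ` and adjoining `c`
yields the shifted diagram of a strict partition. -/
def IsAddable (μ : StrictPartition) (c : ℕ × ℕ) : Prop :=
  c ∉ SD μ ∧ ∃ ν : StrictPartition, SD ν = insert c (SD μ)

open scoped Classical in
/-- The diagonal box-adding operator `a_n` on basis elements: `a_n μ = β·μ` if `μ` has a
removable box on diagonal `n`; `a_n μ = ν` if `SD ν = SD μ ⊔ {(i,j)}` with `j - i = n`;
and `a_n μ = 0` otherwise. -/
def aRaw {R : Type*} [CommRing R] (β : R) (n : ℕ) (μ : StrictPartition) :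
    StrictPartition →₀ R :=
  if ∃ c : ℕ × ℕ, IsRemovable μ c ∧ c.2 = c.1 + n then Finsupp.single μ β
  else if h : ∃ ν : StrictPartition, ∃ c : ℕ × ℕ, c.2 = c.1 + n ∧ c ∉ SD μ ∧
      SD ν = insert c (SD μ) then
    Finsupp.single h.choose 1
  else 0

/-- The operator `a_n`, extended linearly to the free module on strict partitions. -/
def aOp {R : Type*} [CommRing R] (β : R) (n : ℕ) :
    (StrictPartition →₀ R) →ₗ[R] (StrictPartition →₀ R) :=
  Finsupp.lift (StrictPartition →₀ R) R StrictPartition (aRaw β n)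

/-- The operator `A_i(x) := 1 + x·a_i`. -/
def AOp {R : Type*} [CommRing R] (β : R) (i : ℕ) (x : R) :
    (StrictPartition →₀ R) →ₗ[R] (StrictPartition →₀ R) :=
  LinearMap.id + x • aOp β i


namespace YB

/-- The profile function of a strict partition: `F μ i` is the length of row `i` (1-indexed). -/
def F (μ : StrictPartition) (i : ℕ) : ℕ := μ.1.getD (i - 1) 0

lemma F_pos_iff {μ : StrictPartition} {i : ℕ} (hi : 1 ≤ i) :
    0 < F μ i ↔ i - 1 < μ.1.length := by
  constructor
  · intro h
    by_contra hl
    rw [F, List.getD_eq_default _ _ (Nat.le_of_not_lt hl)] at h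
    exact absurd h (lt_irrefl 0)
  · intro h
    rw [F, List.getD_eq_getElem _ _ h]
    exact μ.2.2 _ (List.getElem_mem h)

lemma prof {μ : StrictPartition} {i : ℕ} (hi : 1 ≤ i) (h : 0 < F μ (i + 1)) :
    F μ (i + 1) < F μ i := by
  have h2 : (i + 1) - 1 < μ.1.length := (F_pos_iff (by omega)).mp h
  have h1 : i - 1 < μ.1.length := by omega
  rw [F, List.getD_eq_getElem _ _ h2]
  rw [F, List.getD_eq_getElem _ _ h1]
  have hp := List.isChain_iff_pairwise.mp μ.2.1
  have := List.pairwise_iff_getElem.mp hp (i-1) i (by omega) h2 (by omega)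
  simpa using this

lemma prof_le {μ : StrictPartition} {i j : ℕ} (hi : 1 ≤ i) (hij : i ≤ j) (h : 0 < F μ j) :
    F μ j + (j - i) ≤ F μ i := by
  obtain ⟨d, rfl⟩ := Nat.exists_eq_add_of_le hij
  clear hij
  induction d with
  | zero => simpa using le_refl _
  | succ d ih =>
    have heq : i + (d + 1) = (i + d) + 1 := by omega
    rw [heq] at h ⊢
    have key := prof (i := i + d) (by omega) h
    have h0 : 0 < F μ (i + d) := by omega
    have := ih h0
    omega

lemma F_inj {μ : StrictPartition} {i j : ℕ} (hi : 1 ≤ i) (hj : 1 ≤ j)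
    (hpi : 0 < F μ i) (hpj : 0 < F μ j) (h : F μ i = F μ j) : i = j := by
  rcases lt_trichotomy i j with hlt | heq | hgt
  · have := prof_le hi (le_of_lt hlt) hpj; omega
  · exact heq
  · have := prof_le hj (le_of_lt hgt) hpi; omega

lemma mem_list_iff {μ : StrictPartition} {n : ℕ} (hn : 0 < n) :
    n ∈ μ.1 ↔ ∃ i, 1 ≤ i ∧ F μ i = n := by
  constructor
  · intro h
    obtain ⟨k, hk, hkn⟩ := List.mem_iff_getElem.mp h
    exact ⟨k + 1, by omega, by rw [F]; simpa using (List.getD_eq_getElem _ _ (by simpa using hk)).trans hkn⟩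
  · rintro ⟨i, hi, hF⟩
    have hpos : 0 < F μ i := hF ▸ hn
    have hlen := (F_pos_iff hi).mp hpos
    rw [F, List.getD_eq_getElem _ _ hlen] at hF
    rw [← hF]; exact List.getElem_mem hlen

lemma mem_SD {μ : StrictPartition} (p : ℕ × ℕ) :
    p ∈ SD μ ↔ 1 ≤ p.1 ∧ p.1 ≤ p.2 ∧ p.2 < p.1 + F μ p.1 := by
  rw [SD, shiftedDiagram, Finset.mem_filter, Finset.mem_product, Finset.mem_Icc, Finset.mem_Icc]
  constructor
  · rintro ⟨⟨⟨h1, _⟩, _⟩, h5, h6⟩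
    exact ⟨h1, h5, h6⟩
  · rintro ⟨h1, h2, h3⟩
    have hpos : 0 < F μ p.1 := by omega
    have hlen := (F_pos_iff h1).mp hpos
    have hmem : μ.1.getD (p.1 - 1) 0 ∈ μ.1 := by
      rw [List.getD_eq_getElem _ _ hlen]; exact List.getElem_mem hlen
    have hsum : F μ p.1 ≤ μ.1.sum := List.single_le_sum (fun y _ => Nat.zero_le y) _ hmem
    refine ⟨⟨⟨h1, by omega⟩, ⟨by omega, ?_⟩⟩, h2, h3⟩
    have : F μ p.1 = μ.1.getD (p.1 - 1) 0 := rfl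
    omega

lemma sp_eq_of_F_eq {μ ν : StrictPartition} (h : ∀ i, 1 ≤ i → F μ i = F ν i) : μ = ν := by
  have hg : ∀ k, μ.1.getD k 0 = ν.1.getD k 0 := fun k => by
    have := h (k + 1) (by omega); simpa [F] using this
  have hlen : μ.1.length = ν.1.length := by
    by_contra hne
    rcases Nat.lt_or_ge μ.1.length ν.1.length with hlt | hge
    · have h1 := hg μ.1.length
      rw [List.getD_eq_default _ _ (le_refl _), List.getD_eq_getElem _ _ hlt] at h1
      have := ν.2.2 _ (List.getElem_mem hlt); omega
    · have hlt : ν.1.length < μ.1.length := by omega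
      have h1 := hg ν.1.length
      rw [List.getD_eq_getElem _ _ hlt, List.getD_eq_default _ _ (le_refl _)] at h1
      have := μ.2.2 _ (List.getElem_mem hlt); omega
  apply Subtype.ext
  apply List.ext_getElem hlen
  intro k h1 h2
  have := hg k
  rwa [List.getD_eq_getElem _ _ h1, List.getD_eq_getElem _ _ h2] at this

lemma F_eq_of_row_eq {μ ν : StrictPartition} {i : ℕ} (hi : 1 ≤ i)
    (h : ∀ j, (i, j) ∈ SD μ ↔ (i, j) ∈ SD ν) : F μ i = F ν i := by
  have h1 := h (i + F μ i)
  have h2 := h (i + F ν i)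
  rw [mem_SD, mem_SD] at h1 h2
  simp only at h1 h2
  omega


lemma add_struct {n : ℕ} (hn : 1 ≤ n) {μ ν : StrictPartition} {c : ℕ × ℕ}
    (hc : c.2 = c.1 + n) (hcm : c ∉ SD μ) (hins : SD ν = insert c (SD μ)) :
    1 ≤ c.1 ∧ F μ c.1 = n ∧ F ν c.1 = n + 1 ∧
    (∀ i, 1 ≤ i → i ≠ c.1 → F ν i = F μ i) ∧ n ∈ μ.1 ∧ (n + 1) ∉ μ.1 := by
  obtain ⟨r, m⟩ := c
  simp only at hc hcm hins ⊢
  subst hc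
  have hmem : ∀ p : ℕ × ℕ, p ∈ SD ν ↔ p = (r, r + n) ∨ p ∈ SD μ := by
    intro p; rw [hins, Finset.mem_insert]
  have hr1 : 1 ≤ r := by
    have h := (mem_SD (μ := ν) (r, r + n)).mp (by rw [hins]; exact Finset.mem_insert_self _ _)
    exact h.1
  have hμle : F μ r ≤ n := by
    have h := (mem_SD (μ := μ) (r, r + n))
    rw [h] at hcm
    simp only [Prod.fst, Prod.snd] at hcm
    omega
  have hrow : ∀ i, 1 ≤ i → i ≠ r → F ν i = F μ i := by
    intro i hi hir
    apply F_eq_of_row_eq hi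
    intro j
    rw [hmem (i, j)]
    simp [Prod.ext_iff, hir]
  have key : F μ r = n ∧ F ν r = n + 1 := by
    have h1 := hmem (r, r + n)
    have h2 := hmem (r, r + n + 1)
    have h3 := hmem (r, r + n - 1)
    simp [mem_SD, Prod.ext_iff] at h1 h2 h3
    omega
  have hmemn : n ∈ μ.1 := (mem_list_iff (by omega)).mpr ⟨r, hr1, key.1⟩
  refine ⟨hr1, key.1, key.2, hrow, hmemn, ?_⟩
  intro hmem1
  obtain ⟨s, hs1, hFs⟩ := (mem_list_iff (n := n + 1) (by omega)).mp hmem1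
  have hsr : s ≠ r := by intro h; rw [h] at hFs; omega
  have hslt : s < r := by
    by_contra hge
    have := prof_le hr1 (by omega : r ≤ s) (by omega : 0 < F μ s)
    omega
  have hr_eq : r = s + 1 := by
    have := prof_le hs1 (le_of_lt hslt) (by omega : 0 < F μ r)
    omega
  have hνs : F ν s = n + 1 := by rw [hrow s hs1 hsr]; exact hFs
  have hνr : 0 < F ν r := by omega
  have hlt := prof (μ := ν) hs1 (by rw [← hr_eq]; exact hνr)
  rw [← hr_eq] at hlt
  omega

lemma rem_struct {n : ℕ} (hn : 1 ≤ n) {μ ν : StrictPartition} {c : ℕ × ℕ}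
    (hc : c.2 = c.1 + n) (hcm : c ∈ SD μ) (hers : SD ν = (SD μ).erase c) :
    (n + 1) ∈ μ.1 ∧ n ∉ μ.1 := by
  obtain ⟨r, m⟩ := c
  simp only at hc hcm hers
  subst hc
  have hmem : ∀ p : ℕ × ℕ, p ∈ SD ν ↔ p ≠ (r, r + n) ∧ p ∈ SD μ := by
    intro p; rw [hers, Finset.mem_erase]
  have hcm' := (mem_SD (μ := μ) (r, r + n)).mp hcm
  simp only at hcm'
  have hr1 : 1 ≤ r := hcm'.1
  have hμgt : n < F μ r := by omega
  have hrow : ∀ i, 1 ≤ i → i ≠ r → F ν i = F μ i := by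
    intro i hi hir
    apply F_eq_of_row_eq hi
    intro j
    rw [hmem (i, j)]
    simp [Prod.ext_iff, hir]
  have key : F μ r = n + 1 ∧ F ν r = n := by
    have h1 := hmem (r, r + n)
    have h2 := hmem (r, r + n + 1)
    have h3 := hmem (r, r + n - 1)
    simp [mem_SD, Prod.ext_iff] at h1 h2 h3
    omega
  have hmem1 : (n + 1) ∈ μ.1 := (mem_list_iff (by omega)).mpr ⟨r, hr1, key.1⟩
  refine ⟨hmem1, ?_⟩
  intro hmemn
  obtain ⟨s, hs1, hFs⟩ := (mem_list_iff (n := n) (by omega)).mp hmemn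
  have hsr : s ≠ r := by intro h; rw [h] at hFs; omega
  have hsgt : r < s := by
    by_contra hge
    have := prof_le hs1 (by omega : s ≤ r) (by omega : 0 < F μ r)
    omega
  have hs_eq : s = r + 1 := by
    have := prof_le hr1 (le_of_lt hsgt) (by omega : 0 < F μ s)
    omega
  have hνs : F ν s = n := by rw [hrow s hs1 hsr]; exact hFs
  have hlt := prof (μ := ν) hr1 (by rw [← hs_eq]; omega)
  rw [← hs_eq] at hlt
  omega


/-- Replace the part `n` by `n+1`. -/
def bump (n : ℕ) (μ : StrictPartition) (h1 : n ∈ μ.1) (h2 : (n + 1) ∉ μ.1) : StrictPartition :=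
  ⟨μ.1.map (fun m => if m = n then n + 1 else m), by
    have hp := List.isChain_iff_pairwise.mp μ.2.1
    constructor
    · refine List.isChain_iff_pairwise.mpr ?_
      rw [List.pairwise_map]
      refine hp.imp_of_mem ?_
      intro a b ha hb hab
      have ha' : a ≠ n + 1 := fun h => h2 (h ▸ ha)
      have hb' : b ≠ n + 1 := fun h => h2 (h ▸ hb)
      simp only [gt_iff_lt] at hab ⊢
      split_ifs with hA hB hB <;> omega
    · intro x hx
      rw [List.mem_map] at hx
      obtain ⟨a, ha, rfl⟩ := hx
      have := μ.2.2 a ha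
      split_ifs <;> omega⟩

lemma F_bump {n : ℕ} {μ : StrictPartition} (h1 : n ∈ μ.1) (h2 : (n + 1) ∉ μ.1) (i : ℕ) :
    F (bump n μ h1 h2) i = if F μ i = n then n + 1 else F μ i := by
  have hn : 0 < n := μ.2.2 n h1
  by_cases hlen : i - 1 < μ.1.length
  · show (μ.1.map _).getD (i - 1) 0 = _
    rw [List.getD_eq_getElem _ _ (by simpa using hlen), List.getElem_map]
    rw [show F μ i = μ.1[i-1] from List.getD_eq_getElem _ _ hlen]
  · show (μ.1.map _).getD (i - 1) 0 = _
    rw [List.getD_eq_default _ _ (by simpa using Nat.le_of_not_lt hlen)]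
    rw [show F μ i = 0 from List.getD_eq_default _ _ (Nat.le_of_not_lt hlen)]
    rw [if_neg (by omega)]

lemma mem_bump {n : ℕ} {μ : StrictPartition} (h1 : n ∈ μ.1) (h2 : (n + 1) ∉ μ.1) (m : ℕ) :
    m ∈ (bump n μ h1 h2).1 ↔ (m = n + 1 ∨ (m ∈ μ.1 ∧ m ≠ n)) := by
  show m ∈ μ.1.map _ ↔ _
  rw [List.mem_map]
  constructor
  · rintro ⟨a, ha, rfl⟩
    by_cases han : a = n
    · subst han; left; simp
    · right; rw [if_neg han]; exact ⟨ha, han⟩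
  · rintro (rfl | ⟨hm, hmn⟩)
    · exact ⟨n, h1, by simp⟩
    · exact ⟨m, hm, by rw [if_neg hmn]⟩

lemma SD_bump {n : ℕ} {μ : StrictPartition} (h1 : n ∈ μ.1) (h2 : (n + 1) ∉ μ.1)
    {r : ℕ} (hr : 1 ≤ r) (hFr : F μ r = n) :
    SD (bump n μ h1 h2) = insert (r, r + n) (SD μ) := by
  have hn : 0 < n := μ.2.2 n h1
  ext ⟨i, j⟩
  rw [Finset.mem_insert, mem_SD, mem_SD, F_bump]
  simp only [Prod.mk.injEq]
  by_cases hir : i = r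
  · subst hir
    rw [if_pos hFr, hFr]
    omega
  · by_cases hi0 : 1 ≤ i
    · have hFne : F μ i ≠ n := by
        intro hF
        have hpi : 0 < F μ i := by omega
        have hpj : 0 < F μ r := by omega
        exact hir (F_inj hi0 hr hpi hpj (hF.trans hFr.symm))
      rw [if_neg hFne]
      omega
    · have hi : i = 0 := by omega
      subst hi
      constructor
      · rintro ⟨h, -⟩; exact absurd h (by omega)
      · rintro (⟨h, -⟩ | ⟨h, -, -⟩)
        · exact absurd h (by omega)
        · exact absurd h (by omega)

/-- Replace the part `n+1` by `n` (for `n ≥ 1`). -/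
def dbump (n : ℕ) (hn : 1 ≤ n) (μ : StrictPartition) (h1 : (n + 1) ∈ μ.1) (h2 : n ∉ μ.1) :
    StrictPartition :=
  ⟨μ.1.map (fun m => if m = n + 1 then n else m), by
    have hp := List.isChain_iff_pairwise.mp μ.2.1
    constructor
    · refine List.isChain_iff_pairwise.mpr ?_
      rw [List.pairwise_map]
      refine hp.imp_of_mem ?_
      intro a b ha hb hab
      have ha' : a ≠ n := fun h => h2 (h ▸ ha)
      have hb' : b ≠ n := fun h => h2 (h ▸ hb)
      simp only [gt_iff_lt] at hab ⊢
      split_ifs with hA hB hB <;> omega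
    · intro x hx
      rw [List.mem_map] at hx
      obtain ⟨a, ha, rfl⟩ := hx
      have := μ.2.2 a ha
      split_ifs <;> omega⟩

lemma F_dbump {n : ℕ} (hn : 1 ≤ n) {μ : StrictPartition} (h1 : (n + 1) ∈ μ.1) (h2 : n ∉ μ.1)
    (i : ℕ) : F (dbump n hn μ h1 h2) i = if F μ i = n + 1 then n else F μ i := by
  by_cases hlen : i - 1 < μ.1.length
  · show (μ.1.map _).getD (i - 1) 0 = _
    rw [List.getD_eq_getElem _ _ (by simpa using hlen), List.getElem_map]
    rw [show F μ i = μ.1[i-1] from List.getD_eq_getElem _ _ hlen]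
  · show (μ.1.map _).getD (i - 1) 0 = _
    rw [List.getD_eq_default _ _ (by simpa using Nat.le_of_not_lt hlen)]
    rw [show F μ i = 0 from List.getD_eq_default _ _ (Nat.le_of_not_lt hlen)]
    rw [if_neg (by omega)]

lemma SD_dbump {n : ℕ} (hn : 1 ≤ n) {μ : StrictPartition} (h1 : (n + 1) ∈ μ.1) (h2 : n ∉ μ.1)
    {r : ℕ} (hr : 1 ≤ r) (hFr : F μ r = n + 1) :
    SD (dbump n hn μ h1 h2) = (SD μ).erase (r, r + n) := by
  ext ⟨i, j⟩
  rw [Finset.mem_erase, mem_SD, mem_SD, F_dbump]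
  simp only [Prod.mk.injEq, ne_eq, not_and]
  by_cases hir : i = r
  · subst hir
    rw [if_pos hFr, hFr]
    omega
  · by_cases hi0 : 1 ≤ i
    · have hFne : F μ i ≠ n + 1 := by
        intro hF
        have hpi : 0 < F μ i := by omega
        have hpj : 0 < F μ r := by omega
        exact hir (F_inj hi0 hr hpi hpj (hF.trans hFr.symm))
      rw [if_neg hFne]
      omega
    · have hi : i = 0 := by omega
      subst hi
      constructor
      · rintro ⟨h, -⟩; exact absurd h (by omega)
      · rintro ⟨-, h, -, -⟩; exact absurd h (by omega)

variable {R : Type*} [CommRing R]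

lemma aRaw_rem {n : ℕ} (hn : 1 ≤ n) (β : R) {μ : StrictPartition}
    (h1 : (n + 1) ∈ μ.1) (h2 : n ∉ μ.1) : aRaw β n μ = Finsupp.single μ β := by
  obtain ⟨r, hr, hFr⟩ := (mem_list_iff (n := n + 1) (by omega)).mp h1
  have hc : (r, r + n) ∈ SD μ := by rw [mem_SD]; simp only; omega
  simp only [aRaw]
  rw [if_pos]
  exact ⟨(r, r + n), ⟨hc, dbump n hn μ h1 h2, SD_dbump hn h1 h2 hr hFr⟩, rfl⟩

lemma aRaw_add {n : ℕ} (hn : 1 ≤ n) (β : R) {μ : StrictPartition}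
    (h1 : n ∈ μ.1) (h2 : (n + 1) ∉ μ.1) :
    aRaw β n μ = Finsupp.single (bump n μ h1 h2) 1 := by
  obtain ⟨r, hr, hFr⟩ := (mem_list_iff (n := n) (by omega)).mp h1
  have hrem : ¬ ∃ c : ℕ × ℕ, IsRemovable μ c ∧ c.2 = c.1 + n := by
    rintro ⟨c, ⟨hcm, ν, hν⟩, hd⟩
    exact h2 (rem_struct hn hd hcm hν).1
  have hex : ∃ ν : StrictPartition, ∃ c : ℕ × ℕ, c.2 = c.1 + n ∧ c ∉ SD μ ∧
      SD ν = insert c (SD μ) := by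
    refine ⟨bump n μ h1 h2, (r, r + n), rfl, ?_, SD_bump h1 h2 hr hFr⟩
    rw [mem_SD]; simp only; omega
  simp only [aRaw]
  rw [if_neg hrem, dif_pos hex]
  have hch : hex.choose = bump n μ h1 h2 := by
    obtain ⟨c₀, hd₀, hm₀, hins₀⟩ := hex.choose_spec
    obtain ⟨hr₀, hF₀, hFν₀, hrow₀, -, -⟩ := add_struct hn hd₀ hm₀ hins₀
    have hp₀ : 0 < F μ c₀.1 := by omega
    have hpr : 0 < F μ r := by omega
    have hc₀ : c₀.1 = r := F_inj hr₀ hr hp₀ hpr (hF₀.trans hFr.symm)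
    apply sp_eq_of_F_eq
    intro k hk
    rw [F_bump]
    by_cases hkr : k = r
    · subst hkr
      rw [if_pos hFr, ← hc₀]
      exact hFν₀
    · have hFne : F μ k ≠ n := by
        intro hF
        have hpk : 0 < F μ k := by omega
        exact hkr (F_inj hk hr hpk hpr (hF.trans hFr.symm))
      rw [if_neg hFne]
      exact hrow₀ k hk (by omega)
  rw [hch]

lemma aRaw_zero {n : ℕ} (hn : 1 ≤ n) (β : R) {μ : StrictPartition}
    (h : n ∈ μ.1 ↔ (n + 1) ∈ μ.1) : aRaw β n μ = 0 := by
  have hrem : ¬ ∃ c : ℕ × ℕ, IsRemovable μ c ∧ c.2 = c.1 + n := by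
    rintro ⟨c, ⟨hcm, ν, hν⟩, hd⟩
    obtain ⟨ha, hb⟩ := rem_struct hn hd hcm hν
    exact hb (h.mpr ha)
  have hadd : ¬ ∃ ν : StrictPartition, ∃ c : ℕ × ℕ, c.2 = c.1 + n ∧ c ∉ SD μ ∧
      SD ν = insert c (SD μ) := by
    rintro ⟨ν, c, hd, hm, hins⟩
    obtain ⟨-, -, -, -, ha, hb⟩ := add_struct hn hd hm hins
    exact hb (h.mp ha)
  simp only [aRaw]
  rw [if_neg hrem, dif_neg hadd]

lemma aOp_single (β : R) (n : ℕ) (μ : StrictPartition) (b : R) :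
    aOp β n (Finsupp.single μ b) = b • aRaw β n μ := by
  rw [aOp, Finsupp.lift_apply, Finsupp.sum_single_index]
  exact zero_smul _ _

lemma aOp_aRaw_sq {n : ℕ} (hn : 1 ≤ n) (β : R) (μ : StrictPartition) :
    aOp β n (aRaw β n μ) = β • aRaw β n μ := by
  by_cases h1 : n ∈ μ.1 <;> by_cases h2 : (n + 1) ∈ μ.1
  · rw [aRaw_zero hn β (iff_of_true h1 h2)]; simp
  · have hb1 : (n + 1) ∈ (bump n μ h1 h2).1 := (mem_bump h1 h2 _).mpr (Or.inl rfl)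
    have hb2 : n ∉ (bump n μ h1 h2).1 := by
      rw [mem_bump]
      rintro (h | ⟨-, h⟩)
      · omega
      · exact h rfl
    rw [aRaw_add hn β h1 h2, aOp_single, aRaw_rem hn β hb1 hb2]
    simp [Finsupp.smul_single]
  · rw [aRaw_rem hn β h2 h1, aOp_single, aRaw_rem hn β h2 h1]
  · rw [aRaw_zero hn β (iff_of_false h1 h2)]; simp

lemma aba_zero {n : ℕ} (hn : 1 ≤ n) (β : R) (μ : StrictPartition) :
    aOp β n (aOp β (n + 1) (aRaw β n μ)) = 0 := by
  by_cases h1 : n ∈ μ.1 <;> by_cases h2 : (n + 1) ∈ μ.1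
  · rw [aRaw_zero hn β (iff_of_true h1 h2)]; simp
  · -- add at n
    rw [aRaw_add hn β h1 h2, aOp_single, one_smul]
    have hb2 : (n + 1) ∈ (bump n μ h1 h2).1 := (mem_bump h1 h2 _).mpr (Or.inl rfl)
    by_cases h3 : (n + 2) ∈ μ.1
    · have hb3 : (n + 2) ∈ (bump n μ h1 h2).1 :=
        (mem_bump h1 h2 _).mpr (Or.inr ⟨h3, by omega⟩)
      rw [aRaw_zero (by omega) β (iff_of_true hb2 hb3)]
      simp
    · have hb3 : (n + 2) ∉ (bump n μ h1 h2).1 := by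
        rw [mem_bump]
        rintro (h | ⟨h, -⟩)
        · omega
        · exact h3 h
      rw [aRaw_add (by omega) β hb2 hb3, aOp_single, one_smul]
      apply aRaw_zero hn β
      constructor
      · intro h
        rw [mem_bump] at h
        rcases h with h | ⟨h, -⟩
        · omega
        · rw [mem_bump] at h
          rcases h with h | ⟨-, h⟩
          · omega
          · exact absurd rfl h
      · intro h
        rw [mem_bump] at h
        rcases h with h | ⟨-, h⟩
        · omega
        · exact absurd rfl h
  · -- remove at n
    rw [aRaw_rem hn β h2 h1, aOp_single, map_smul]
    by_cases h3 : (n + 2) ∈ μ.1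
    · rw [aRaw_zero (by omega) β (iff_of_true h2 h3)]; simp
    · rw [aRaw_add (by omega) β h2 h3, aOp_single, one_smul]
      rw [aRaw_zero hn β ?_]
      · simp
      constructor
      · intro h
        rw [mem_bump] at h
        rcases h with h | ⟨h, -⟩
        · omega
        · exact absurd h h1
      · intro h
        rw [mem_bump] at h
        rcases h with h | ⟨-, h⟩
        · omega
        · exact absurd rfl h
  · rw [aRaw_zero hn β (iff_of_false h1 h2)]; simp

lemma bab_zero {n : ℕ} (hn : 1 ≤ n) (β : R) (μ : StrictPartition) :
    aOp β (n + 1) (aOp β n (aRaw β (n + 1) μ)) = 0 := by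
  by_cases h2 : (n + 1) ∈ μ.1 <;> by_cases h3 : (n + 2) ∈ μ.1
  · rw [aRaw_zero (by omega) β (iff_of_true h2 h3)]; simp
  · -- add at n+1
    rw [aRaw_add (by omega) β h2 h3, aOp_single, one_smul]
    have hbn1 : (n + 1) ∉ (bump (n + 1) μ h2 h3).1 := by
      rw [mem_bump]
      rintro (h | ⟨-, h⟩)
      · omega
      · exact h rfl
    by_cases h1 : n ∈ μ.1
    · have hb1 : n ∈ (bump (n + 1) μ h2 h3).1 :=
        (mem_bump h2 h3 _).mpr (Or.inr ⟨h1, by omega⟩)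
      rw [aRaw_add hn β hb1 hbn1, aOp_single, one_smul]
      apply aRaw_zero (by omega) β
      apply iff_of_true
      · exact (mem_bump hb1 hbn1 _).mpr (Or.inl rfl)
      · refine (mem_bump hb1 hbn1 _).mpr (Or.inr ⟨?_, by omega⟩)
        exact (mem_bump h2 h3 _).mpr (Or.inl rfl)
    · have hb1 : n ∉ (bump (n + 1) μ h2 h3).1 := by
        rw [mem_bump]
        rintro (h | ⟨h, -⟩)
        · omega
        · exact h1 h
      rw [aRaw_zero hn β (iff_of_false hb1 hbn1)]
      simp
  · -- remove at n+1
    rw [aRaw_rem (by omega) β h3 h2, aOp_single, map_smul]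
    by_cases h1 : n ∈ μ.1
    · rw [aRaw_add hn β h1 h2, aOp_single, one_smul]
      rw [aRaw_zero (by omega) β ?_]
      · simp
      apply iff_of_true
      · exact (mem_bump h1 h2 _).mpr (Or.inl rfl)
      · exact (mem_bump h1 h2 _).mpr (Or.inr ⟨h3, by omega⟩)
    · rw [aRaw_zero hn β (iff_of_false h1 h2)]; simp
  · rw [aRaw_zero (by omega) β (iff_of_false h2 h3)]; simp

lemma comp_self {n : ℕ} (hn : 1 ≤ n) (β : R) :
    (aOp (R := R) β n) ∘ₗ aOp β n = β • aOp β n := by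
  apply Finsupp.lhom_ext
  intro μ b
  simp only [LinearMap.comp_apply, LinearMap.smul_apply, aOp_single, map_smul,
    aOp_aRaw_sq hn]
  rw [smul_comm]

lemma comp_aba {n : ℕ} (hn : 1 ≤ n) (β : R) :
    (aOp (R := R) β n) ∘ₗ (aOp β (n + 1) ∘ₗ aOp β n) = 0 := by
  apply Finsupp.lhom_ext
  intro μ b
  simp only [LinearMap.comp_apply, aOp_single, map_smul, aba_zero hn,
    smul_zero, LinearMap.zero_apply]

lemma comp_bab {n : ℕ} (hn : 1 ≤ n) (β : R) :
    (aOp (R := R) β (n + 1)) ∘ₗ (aOp β n ∘ₗ aOp β (n + 1)) = 0 := by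
  apply Finsupp.lhom_ext
  intro μ b
  simp only [LinearMap.comp_apply, aOp_single, map_smul, bab_zero hn,
    smul_zero, LinearMap.zero_apply]

end YB

/-- The Yang–Baxter relation
`A_{i+1}(x)·A_i(x⊕y)·A_{i+1}(y) = A_i(y)·A_{i+1}(x⊕y)·A_i(x)` for all `i > 0`,
where `x ⊕ y := x + y + β·x·y`. -/
theorem AOp_yang_baxter {R : Type*} [CommRing R] (β x y : R) (i : ℕ) (hi : 0 < i) :
    (AOp β (i + 1) x).comp ((AOp β i (x + y + β * x * y)).comp (AOp β (i + 1) y)) =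
      (AOp β i y).comp ((AOp β (i + 1) (x + y + β * x * y)).comp (AOp β i x)) := by
  have rAA : aOp (R := R) β i * aOp β i = β • aOp β i := by
    rw [Module.End.mul_eq_comp]; exact YB.comp_self hi β
  have rBB : aOp (R := R) β (i + 1) * aOp β (i + 1) = β • aOp β (i + 1) := by
    rw [Module.End.mul_eq_comp]; exact YB.comp_self (by omega) β
  have rABA : aOp (R := R) β i * (aOp β (i + 1) * aOp β i) = 0 := by
    rw [Module.End.mul_eq_comp, Module.End.mul_eq_comp]; exact YB.comp_aba hi β
  have rBAB : aOp (R := R) β (i + 1) * (aOp β i * aOp β (i + 1)) = 0 := by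
    rw [Module.End.mul_eq_comp, Module.End.mul_eq_comp]; exact YB.comp_bab hi β
  simp only [AOp, ← Module.End.one_eq_id, ← Module.End.mul_eq_comp]
  simp only [mul_add, add_mul, mul_one, one_mul, smul_mul_assoc, mul_smul_comm, smul_smul]
  simp only [rAA, rBB, rABA, rBAB, smul_zero, add_zero, smul_smul]
  module


end
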